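/- For all integers n ≥ k ≥ 1, the number of increasing ordered trees with n edges whose rightmost path from the root has length at least k equals binomial(2n-k, k) * (2n-2k-1)!!, where (-1)!! = 1. -/

import Mathlib

open Nat

/-- Rooted plane (ordered) trees with natural-number vertex labels. -/
inductive LTree where
  | node : ℕ → List LTree → LTree

namespace LTree

/-- The label of the root. -/
def rootLabel : LTree → ℕ
  | .node a _ => a

mutual
  /-- The list of all vertex labels of a tree (preorder). -/
  def labels : LTree → List ℕ
    | .node a ts => a :: labelsList ts
  def labelsList : List LTree → List ℕ
    | [] => []
    | t :: ts => labels t ++ labelsList ts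
end

mutual
  /-- Labels strictly increase along every path away from the root. -/
  def Incr : LTree → Prop
    | .node a ts => IncrList a ts
  def IncrList : ℕ → List LTree → Prop
    | _, [] => True
    | a, .node b us :: ts => a < b ∧ Incr (.node b us) ∧ IncrList a ts
end

mutual
  /-- The length of the rightmost path from the root. -/
  def rlen : LTree → ℕ
    | .node _ ts => rlenList ts
  def rlenList : List LTree → ℕ
    | [] => 0
    | [t] => 1 + rlen t
    | _ :: t :: ts => rlenList (t :: ts)
end

end LTree

namespace LTree

-- number of vertices
mutual
  def nv : LTree → ℕ
    | .node _ ts => 1 + nvL ts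
  def nvL : List LTree → ℕ
    | [] => 0
    | t :: ts => nv t + nvL ts
end

mutual
  def insT (m i : ℕ) : LTree → LTree
    | .node a ts => .node a (insL m i ts)
  def insL (m i : ℕ) : List LTree → List LTree
    | [] => [.node m []]
    | t :: ts =>
      if i = 0 then .node m [] :: t :: ts
      else if i ≤ 2 * nv t - 1 then insT m (i - 1) t :: ts
      else t :: insL m (i - 2 * nv t) ts
end

attribute [local instance] Classical.propDecidable

mutual
  noncomputable def remT (m : ℕ) : LTree → LTree
    | .node a ts => .node a (remL m ts)
  noncomputable def remL (m : ℕ) : List LTree → List LTree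
    | [] => []
    | t :: ts =>
      if t = .node m [] then ts
      else if m ∈ labels t then remT m t :: ts
      else t :: remL m ts
end

mutual
  noncomputable def posT (m : ℕ) : LTree → ℕ
    | .node _ ts => posL m ts
  noncomputable def posL (m : ℕ) : List LTree → ℕ
    | [] => 0
    | t :: ts =>
      if t = .node m [] then 0
      else if m ∈ labels t then posT m t + 1
      else posL m ts + 2 * nv t
end

-- induction principle
mutual
  theorem recT {p : LTree → Prop} {q : List LTree → Prop}
      (hnode : ∀ a ts, q ts → p (.node a ts))
      (hnil : q [])
      (hcons : ∀ t ts, p t → q ts → q (t :: ts)) : ∀ t, p t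
    | .node a ts => hnode a ts (recL hnode hnil hcons ts)
  theorem recL {p : LTree → Prop} {q : List LTree → Prop}
      (hnode : ∀ a ts, q ts → p (.node a ts))
      (hnil : q [])
      (hcons : ∀ t ts, p t → q ts → q (t :: ts)) : ∀ ts, q ts
    | [] => hnil
    | t :: ts => hcons t ts (recT hnode hnil hcons t) (recL hnode hnil hcons ts)
end

end LTree

namespace LTree

theorem rec' {p : LTree → Prop} {q : List LTree → Prop}
    (hnode : ∀ a ts, q ts → p (.node a ts))
    (hnil : q [])
    (hcons : ∀ t ts, p t → q ts → q (t :: ts)) :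
    (∀ t, p t) ∧ (∀ ts, q ts) :=
  ⟨recT hnode hnil hcons, recL hnode hnil hcons⟩

theorem nv_pos (t : LTree) : 1 ≤ nv t := by
  cases t with | node a ts => simp [nv]

theorem nvL_cons (t : LTree) (ts : List LTree) : nvL (t :: ts) = nv t + nvL ts := by
  simp [nvL]

theorem labels_length :
    (∀ t : LTree, (labels t).length = nv t) ∧
    (∀ ts : List LTree, (labelsList ts).length = nvL ts) := by
  apply rec'
  · intro a ts h; simp [labels, nv, h]; omega
  · simp [labelsList, nvL]
  · intro t ts h1 h2; simp [labelsList, nvL, h1, h2]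

theorem rlen_le :
    (∀ t : LTree, rlen t + 1 ≤ nv t) ∧
    (∀ ts : List LTree, rlenList ts ≤ nvL ts) := by
  apply rec'
  · intro a ts h; simp [rlen, nv]; omega
  · simp [rlenList, nvL]
  · intro t ts h1 h2
    cases ts with
    | nil => simp [rlenList, nvL]; omega
    | cons u us =>
      have h2' : rlenList (u :: us) ≤ nv u + nvL us := by simpa [nvL_cons] using h2
      simp only [rlenList, nvL_cons]; have := nv_pos t; omega

theorem insL_ne_nil (m i : ℕ) (ts : List LTree) : insL m i ts ≠ [] := by
  cases ts with
  | nil => simp [insL]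
  | cons t ts => simp only [insL]; split_ifs <;> simp

theorem ins_nv (m : ℕ) :
    (∀ (t : LTree) (i : ℕ), nv (insT m i t) = nv t + 1) ∧
    (∀ (ts : List LTree) (i : ℕ), nvL (insL m i ts) = nvL ts + 1) := by
  apply rec'
  · intro a ts h i; simp [insT, nv, h]; omega
  · intro i; simp [insL, nvL, nv]
  · intro t ts h1 h2 i
    simp only [insL]
    split_ifs with hi1 hi2
    · simp [nvL_cons, nv, nvL]; omega
    · simp [nvL_cons, h1]; omega
    · simp [nvL_cons, h2]; omega

theorem ins_labels (m : ℕ) :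
    (∀ (t : LTree) (i : ℕ), (labels (insT m i t)).Perm (m :: labels t)) ∧
    (∀ (ts : List LTree) (i : ℕ), (labelsList (insL m i ts)).Perm (m :: labelsList ts)) := by
  apply rec'
  · intro a ts h i
    simp only [insT, labels]
    exact ((h i).cons a).trans (List.Perm.swap m a _)
  · intro i; simp [insL, labelsList, labels]
  · intro t ts h1 h2 i
    simp only [insL]
    split_ifs with hi1 hi2
    · simp [labelsList, labels]
    · simp only [labelsList]
      exact ((h1 (i-1)).append_right _).trans (by simp)
    · simp only [labelsList]
      exact (((h2 _).append_left (labels t))).trans List.perm_middle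

end LTree

namespace LTree

attribute [local instance] Classical.propDecidable

theorem insL_zero (m : ℕ) (ts : List LTree) : insL m 0 ts = .node m [] :: ts := by
  cases ts <;> simp [insL]

theorem rootLabel_insT (m i : ℕ) (t : LTree) : rootLabel (insT m i t) = rootLabel t := by
  cases t with | node a ts => simp [insT, rootLabel]

theorem rootLabel_remT (m : ℕ) (t : LTree) : rootLabel (remT m t) = rootLabel t := by
  cases t with | node a ts => simp [remT, rootLabel]

theorem ins_incr (m : ℕ) :
    (∀ (t : LTree) (i : ℕ), Incr t → (∀ x ∈ labels t, x < m) → Incr (insT m i t)) ∧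
    (∀ (ts : List LTree) (i : ℕ) (a : ℕ), a < m → IncrList a ts →
      (∀ x ∈ labelsList ts, x < m) → IncrList a (insL m i ts)) := by
  apply rec'
  · intro a ts h i hI hb
    have ha : a < m := hb a (by simp [labels])
    simp only [insT, Incr] at *
    exact h i a ha hI (fun x hx => hb x (by simp [labels, hx]))
  · intro i a ha _ _
    simp [insL, IncrList, Incr]
    exact ha
  · intro t ts h1 h2 i a ha hI hb
    obtain ⟨b, us⟩ := t
    simp only [IncrList] at hI
    obtain ⟨hab, hIt, hIts⟩ := hI
    simp only [insL]
    split_ifs with hi1 hi2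
    · simp only [IncrList]
      exact ⟨ha, by simp [Incr, IncrList], hab, hIt, hIts⟩
    · simp only [insT, IncrList]
      refine ⟨hab, ?_, hIts⟩
      have := h1 (i-1) hIt (fun x hx => hb x (by simp [labelsList, hx]))
      simpa [insT] using this
    · simp only [IncrList]
      refine ⟨hab, hIt, ?_⟩
      exact h2 _ a ha hIts (fun x hx => hb x (by simp [labelsList, hx]))

theorem eq_ite_of_cases {P : Prop} [Decidable P] {a b x : ℕ} (h1 : P → x = a)
    (h2 : ¬P → x = b) : x = if P then a else b := by
  split
  · exact h1 ‹_›
  · exact h2 ‹_›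

theorem ins_rlen (m : ℕ) :
    (∀ (t : LTree), ∀ i ≤ 2 * nv t - 2,
      rlen (insT m i t) = if 2 * nv t - 2 - rlen t ≤ i then 2 * nv t - 2 - i + 1 else rlen t) ∧
    (∀ (ts : List LTree), ∀ i ≤ 2 * nvL ts,
      rlenList (insL m i ts) = if 2 * nvL ts - rlenList ts ≤ i then 2 * nvL ts - i + 1 else rlenList ts) := by
  apply rec'
  · intro a ts h i hi
    simp only [nv, rlen, insT] at *
    have h' := h i (by omega)
    rw [h']
    split <;> apply eq_ite_of_cases <;> intro <;> omega
  · intro i hi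
    simp only [nvL] at hi
    have : i = 0 := by omega
    subst this
    simp [insL, rlenList, rlen, nvL]
  · intro t ts h1 h2 i hi
    have hNt : 1 ≤ nv t := nv_pos t
    have hrt : rlen t + 1 ≤ nv t := rlen_le.1 t
    have hrts : rlenList ts ≤ nvL ts := rlen_le.2 ts
    rw [nvL_cons] at hi
    by_cases hi1 : i = 0
    · subst hi1
      rw [insL_zero]
      have h0 : rlenList (LTree.node m [] :: t :: ts) = rlenList (t :: ts) := by
        simp [rlenList]
      rw [h0, if_neg]
      have hr := rlen_le.2 (t :: ts)
      have hn := nvL_cons t ts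
      omega
    · by_cases hi2 : i ≤ 2 * nv t - 1
      · have hins : insL m i (t :: ts) = insT m (i - 1) t :: ts := by
          simp only [insL]; rw [if_neg hi1, if_pos hi2]
        rw [hins]
        have h1' := h1 (i - 1) (by omega)
        cases ts with
        | nil =>
          have e1 : rlenList [insT m (i-1) t] = 1 + rlen (insT m (i-1) t) := by simp [rlenList]
          have e2 : rlenList [t] = 1 + rlen t := by simp [rlenList]
          rw [e1, h1', e2]
          simp only [nvL_cons, nvL]
          split <;> apply eq_ite_of_cases <;> intro <;> omega
        | cons u us =>
          have e1 : rlenList (insT m (i-1) t :: u :: us) = rlenList (u :: us) := by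
            simp [rlenList]
          have e2 : rlenList (t :: u :: us) = rlenList (u :: us) := by
            simp [rlenList]
          have h3 : rlenList (u :: us) ≤ nvL (u :: us) := rlen_le.2 _
          have h4 : 1 ≤ nvL (u :: us) := by
            rw [nvL_cons]; have := nv_pos u; omega
          rw [e1, e2, nvL_cons, if_neg]
          omega
      · have hins : insL m i (t :: ts) = t :: insL m (i - 2 * nv t) ts := by
          simp only [insL]; rw [if_neg hi1, if_neg hi2]
        rw [hins]
        cases ts with
        | nil =>
          simp only [nvL] at hi hrts
          have hie : i = 2 * nv t := by omega
          subst hie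
          rw [Nat.sub_self, insL_zero]
          have e1 : rlenList [t, LTree.node m []] = 1 := by simp [rlenList, rlen]
          have e3 : rlenList [t] = 1 + rlen t := by simp [rlenList]
          rw [e1, e3]
          simp only [nvL_cons, nvL]
          apply eq_ite_of_cases <;> intro <;> omega
        | cons u us =>
          simp only [nvL_cons] at h2 hi ⊢
          have h2' := h2 (i - 2 * nv t) (by omega)
          obtain ⟨w, ws, hw⟩ : ∃ w ws, insL m (i - 2 * nv t) (u :: us) = w :: ws := by
            cases hc : insL m (i - 2 * nv t) (u :: us) with
            | nil => exact absurd hc (insL_ne_nil _ _ _)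
            | cons w ws => exact ⟨w, ws, rfl⟩
          have e1 : rlenList (t :: insL m (i - 2*nv t) (u :: us)) = rlenList (insL m (i - 2*nv t) (u :: us)) := by
            rw [hw]; simp [rlenList]
          have e2 : rlenList (t :: u :: us) = rlenList (u :: us) := by simp [rlenList]
          have h3 : rlenList (u :: us) ≤ nvL (u :: us) := rlen_le.2 _
          rw [nvL_cons] at h3
          rw [e1, h2', e2]
          split_ifs <;> omega

end LTree

namespace LTree

attribute [local instance] Classical.propDecidable

theorem mem_labels_ins (m : ℕ) (i : ℕ) (t : LTree) : m ∈ labels (insT m i t) :=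
  ((ins_labels m).1 t i).mem_iff.mpr (by simp)

theorem insT_ne_leaf (m i x : ℕ) (t : LTree) : insT m i t ≠ .node x [] := by
  cases t with | node b us =>
  simp only [insT]
  intro h
  injection h with h1 h2
  exact insL_ne_nil m i us h2

theorem rem_ins (m : ℕ) :
    (∀ (t : LTree), ∀ i ≤ 2 * nv t - 2, m ∉ labels t →
      remT m (insT m i t) = t ∧ posT m (insT m i t) = i) ∧
    (∀ (ts : List LTree), ∀ i ≤ 2 * nvL ts, m ∉ labelsList ts →
      remL m (insL m i ts) = ts ∧ posL m (insL m i ts) = i) := by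
  apply rec'
  · intro a ts h i hi hm
    simp only [labels, List.mem_cons] at hm
    push_neg at hm
    simp only [nv] at hi
    have := h i (by omega) hm.2
    simp only [insT, remT, posT, this.1, this.2]
    constructor <;> trivial
  · intro i hi hm
    simp only [nvL] at hi
    have : i = 0 := by omega
    subst this
    simp only [insL]
    constructor
    · rw [remL, if_pos rfl]
    · rw [posL, if_pos rfl]
  · intro t ts h1 h2 i hi hm
    simp only [labelsList, List.mem_append] at hm
    push_neg at hm
    have hNt : 1 ≤ nv t := nv_pos t
    rw [nvL_cons] at hi
    by_cases hi1 : i = 0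
    · subst hi1
      rw [insL_zero, remL, if_pos rfl, posL, if_pos rfl]
      exact ⟨rfl, rfl⟩
    · by_cases hi2 : i ≤ 2 * nv t - 1
      · have hins : insL m i (t :: ts) = insT m (i - 1) t :: ts := by
          simp only [insL]; rw [if_neg hi1, if_pos hi2]
        rw [hins]
        have ht := h1 (i - 1) (by omega) hm.1
        rw [remL, if_neg (insT_ne_leaf m (i-1) m t), if_pos (mem_labels_ins m (i-1) t),
            posL, if_neg (insT_ne_leaf m (i-1) m t), if_pos (mem_labels_ins m (i-1) t),
            ht.1, ht.2]
        constructor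
        · rfl
        · omega
      · have hins : insL m i (t :: ts) = t :: insL m (i - 2 * nv t) ts := by
          simp only [insL]; rw [if_neg hi1, if_neg hi2]
        rw [hins]
        have hne : t ≠ .node m [] := by
          intro h; apply hm.1; rw [h]; simp [labels, labelsList]
        have hts := h2 (i - 2 * nv t) (by omega) hm.2
        rw [remL, if_neg hne, if_neg hm.1, posL, if_neg hne, if_neg hm.1, hts.1, hts.2]
        constructor
        · rfl
        · omega

theorem ins_rem (m : ℕ) :
    (∀ (t : LTree), Incr t → (∀ x ∈ labels t, x ≤ m) → m ∈ labels t → t ≠ .node m [] →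
      Incr (remT m t) ∧ (m :: labels (remT m t)).Perm (labels t) ∧
      nv (remT m t) + 1 = nv t ∧ posT m t ≤ 2 * nv (remT m t) - 2 ∧
      insT m (posT m t) (remT m t) = t) ∧
    (∀ (ts : List LTree), ∀ a, IncrList a ts → (∀ x ∈ labelsList ts, x ≤ m) →
      m ∈ labelsList ts →
      IncrList a (remL m ts) ∧ (m :: labelsList (remL m ts)).Perm (labelsList ts) ∧
      nvL (remL m ts) + 1 = nvL ts ∧ posL m ts ≤ 2 * nvL (remL m ts) ∧
      insL m (posL m ts) (remL m ts) = ts) := by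
  apply rec'
  · intro a ts h hI hb hm hne
    have hIts : IncrList a ts := by simpa [Incr] using hI
    have hb' : ∀ x ∈ labelsList ts, x ≤ m := fun x hx => hb x (by simp [labels, hx])
    have hm' : m ∈ labelsList ts := by
      simp only [labels, List.mem_cons] at hm
      rcases hm with hm | hm
      · -- m = a : impossible
        exfalso
        cases hts : ts with
        | nil => subst hts; exact hne (by rw [hm])
        | cons u us =>
          obtain ⟨b, vs⟩ := u
          rw [hts] at hIts
          simp only [IncrList] at hIts
          have hbm : b ≤ m := by
            apply hb
            simp [labels, hts, labelsList]
          omega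
      · exact hm
    obtain ⟨c1, c2, c3, c4, c5⟩ := h a hIts hb' hm'
    refine ⟨?_, ?_, ?_, ?_, ?_⟩
    · simpa [remT, Incr] using c1
    · simp only [remT, labels]
      exact ((List.Perm.swap a m _).trans (c2.cons a))
    · simp only [remT, nv]; omega
    · simp only [remT, posT, nv]; omega
    · simp only [remT, posT, insT]
      rw [c5]
  · intro a _ _ hm
    simp [labelsList] at hm
  · intro t ts h1 h2 a hI hb hm
    obtain ⟨b, us⟩ := t
    simp only [IncrList] at hI
    obtain ⟨hab, hIt, hIts⟩ := hI
    simp only [labelsList, List.mem_append] at hm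
    have hb1 : ∀ x ∈ labels (LTree.node b us), x ≤ m := fun x hx => hb x (by simp [labelsList, hx])
    have hb2 : ∀ x ∈ labelsList ts, x ≤ m := fun x hx => hb x (by simp [labelsList, hx])
    by_cases hc1 : (LTree.node b us) = LTree.node m []
    · rw [remL, if_pos hc1, posL, if_pos hc1]
      refine ⟨hIts, ?_, ?_, by omega, ?_⟩
      · rw [hc1]; simp [labelsList, labels]
      · rw [nvL_cons, hc1]; simp [nv, nvL]; omega
      · rw [insL_zero, hc1]
    · by_cases hc2 : m ∈ labels (LTree.node b us)
      · obtain ⟨c1, c2, c3, c4, c5⟩ := h1 hIt hb1 hc2 hc1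
        rw [remL, if_neg hc1, if_pos hc2, posL, if_neg hc1, if_pos hc2]
        have hnv : 1 ≤ nv (remT m (LTree.node b us)) := nv_pos _
        refine ⟨?_, ?_, ?_, ?_, ?_⟩
        · simp only [remT, IncrList]
          refine ⟨hab, ?_, hIts⟩
          simpa [remT, Incr] using c1
        · simp only [labelsList]
          exact c2.append_right _
        · rw [nvL_cons, nvL_cons]; omega
        · rw [nvL_cons]; omega
        · have hins : insL m (posT m (LTree.node b us) + 1) (remT m (LTree.node b us) :: ts)
              = insT m (posT m (LTree.node b us)) (remT m (LTree.node b us)) :: ts := by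
            simp only [insL]
            rw [if_neg (by omega), if_pos (by omega)]
            congr 1
          rw [hins, c5]
      · have hm' : m ∈ labelsList ts := by
          rcases hm with hm | hm
          · exact absurd hm hc2
          · exact hm
        obtain ⟨c1, c2, c3, c4, c5⟩ := h2 a hIts hb2 hm'
        rw [remL, if_neg hc1, if_neg hc2, posL, if_neg hc1, if_neg hc2]
        have hNt : 1 ≤ nv (LTree.node b us) := nv_pos _
        refine ⟨?_, ?_, ?_, ?_, ?_⟩
        · simp only [IncrList]
          exact ⟨hab, hIt, c1⟩
        · simp only [labelsList]
          exact List.perm_middle.symm.trans (c2.append_left _)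
        · rw [nvL_cons, nvL_cons]; omega
        · rw [nvL_cons]; omega
        · have hins : insL m (posL m ts + 2 * nv (LTree.node b us)) (LTree.node b us :: remL m ts)
              = LTree.node b us :: insL m (posL m ts + 2 * nv (LTree.node b us) - 2 * nv (LTree.node b us)) (remL m ts) := by
            simp only [insL]
            rw [if_neg (by omega), if_neg (by omega)]
          rw [hins]
          rw [Nat.add_sub_cancel, c5]

end LTree

namespace LTree

/-- The conditions apart from the rightmost-path condition. -/
def GoodT (n : ℕ) (T : LTree) : Prop :=
  (labels T).Perm (List.range (n+1)) ∧ rootLabel T = 0 ∧ Incr T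

theorem good_nv {n : ℕ} {T : LTree} (h : GoodT n T) : nv T = n + 1 := by
  have := h.1.length_eq
  rw [labels_length.1 T] at this
  simpa using this

theorem good_labels_le {n : ℕ} {T : LTree} (h : GoodT n T) : ∀ x ∈ labels T, x ≤ n := by
  intro x hx
  have := h.1.mem_iff.mp hx
  simp [List.mem_range] at this
  omega

theorem good_rlen_le {n : ℕ} {T : LTree} (h : GoodT n T) : rlen T ≤ n := by
  have h1 := rlen_le.1 T
  rw [good_nv h] at h1
  omega

theorem range_succ_perm (n : ℕ) : (List.range (n+1)).Perm (n :: List.range n) := by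
  rw [List.range_succ]
  exact List.perm_append_singleton n (List.range n)

theorem good_rem {n : ℕ} (hn : 1 ≤ n) {T : LTree} (h : GoodT n T) :
    GoodT (n-1) (remT n T) ∧ posT n T ≤ 2*n - 2 ∧ nv (remT n T) = n ∧
      insT n (posT n T) (remT n T) = T := by
  have hmem : n ∈ labels T := h.1.mem_iff.mpr (by simp)
  have hne : T ≠ .node n [] := by
    intro he
    have : rootLabel T = n := by rw [he]; rfl
    rw [h.2.1] at this
    omega
  obtain ⟨c1, c2, c3, c4, c5⟩ := (ins_rem n).1 T h.2.2 (good_labels_le h) hmem hne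
  have hnv : nv (remT n T) = n := by
    have := good_nv h; omega
  have hlab : (labels (remT n T)).Perm (List.range (n-1+1)) := by
    have e : n - 1 + 1 = n := by omega
    rw [e]
    have p1 : (n :: labels (remT n T)).Perm (n :: List.range n) :=
      c2.trans (h.1.trans (range_succ_perm n))
    exact p1.cons_inv
  refine ⟨⟨hlab, ?_, c1⟩, by omega, hnv, c5⟩
  rw [rootLabel_remT]; exact h.2.1

theorem good_ins {n : ℕ} (hn : 1 ≤ n) {T' : LTree} (h : GoodT (n-1) T') {i : ℕ}
    (hi : i ≤ 2*n - 2) :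
    GoodT n (insT n i T') ∧
      rlen (insT n i T') = (if 2*n - 2 - rlen T' ≤ i then 2*n - 2 - i + 1 else rlen T') ∧
      remT n (insT n i T') = T' ∧ posT n (insT n i T') = i := by
  have hnv : nv T' = n := by have := good_nv h; omega
  have hi' : i ≤ 2 * nv T' - 2 := by omega
  have hnot : n ∉ labels T' := by
    intro hx
    have := h.1.mem_iff.mp hx
    simp [List.mem_range] at this
    omega
  have hlab : (labels (insT n i T')).Perm (List.range (n+1)) := by
    refine ((ins_labels n).1 T' i).trans ?_
    refine List.Perm.trans ?_ (range_succ_perm n).symm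
    have e : n - 1 + 1 = n := by omega
    exact (h.1.cons n).trans (by rw [e])
  have hincr : Incr (insT n i T') := by
    refine (ins_incr n).1 T' i h.2.2 ?_
    intro x hx
    have := h.1.mem_iff.mp hx
    simp [List.mem_range] at this
    omega
  have hrlen : rlen (insT n i T') = if 2*n - 2 - rlen T' ≤ i then 2*n - 2 - i + 1 else rlen T' := by
    have := (ins_rlen n).1 T' i hi'
    rw [hnv] at this
    exact this
  have hrem := (rem_ins n).1 T' i hi' hnot
  exact ⟨⟨hlab, by rw [rootLabel_insT]; exact h.2.1, hincr⟩, hrlen, hrem.1, hrem.2⟩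

/-- new rlen after insertion at slot i -/
def newr (n : ℕ) (T : LTree) (i : ℕ) : ℕ :=
  if 2*n - 2 - rlen T ≤ i then 2*n - 2 - i + 1 else rlen T

theorem stepEquiv (n k : ℕ) (hn : 1 ≤ n) :
    Nonempty ({T : LTree // GoodT n T ∧ k ≤ rlen T} ≃
      {p : {T : LTree // GoodT (n-1) T} × Fin (2*n-1) // k ≤ newr n p.1.1 (p.2 : ℕ)}) := by
  refine ⟨⟨fun x => ⟨⟨⟨remT n x.1, (good_rem hn x.2.1).1⟩,
      ⟨posT n x.1, by have := (good_rem hn x.2.1).2.1; omega⟩⟩, ?_⟩,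
    fun y => ⟨insT n (y.1.2 : ℕ) y.1.1.1, ?_⟩, ?_, ?_⟩⟩
  · -- condition for forward map
    obtain ⟨g1, g2, g3, g4⟩ := good_rem hn x.2.1
    have hb := (good_ins hn g1 (i := posT n x.1) g2).2.1
    rw [g4] at hb
    simp only [newr]
    rw [← hb]
    exact x.2.2
  · -- invFun well-defined
    have hi : (y.1.2 : ℕ) ≤ 2*n - 2 := by have := y.1.2.2; omega
    obtain ⟨g1, g2, g3, g4⟩ := good_ins hn y.1.1.2 hi
    refine ⟨g1, ?_⟩
    rw [g2]
    exact y.2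
  · -- left inverse
    intro x
    apply Subtype.ext
    exact (good_rem hn x.2.1).2.2.2
  · -- right inverse
    intro y
    apply Subtype.ext
    have hi : (y.1.2 : ℕ) ≤ 2*n - 2 := by have := y.1.2.2; omega
    obtain ⟨g1, g2, g3, g4⟩ := good_ins hn y.1.1.2 hi
    apply Prod.ext
    · exact Subtype.ext g3
    · exact Fin.ext g4

end LTree

namespace LTree

theorem labelsList_eq_nil {ts : List LTree} (h : labelsList ts = []) : ts = [] := by
  cases ts with
  | nil => rfl
  | cons t ts => obtain ⟨b, us⟩ := t; simp [labelsList, labels] at h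

theorem good_zero {T : LTree} (h : GoodT 0 T) : T = .node 0 [] := by
  obtain ⟨b, ts⟩ := T
  have hroot : b = 0 := h.2.1
  subst hroot
  have hlen := h.1.length_eq
  simp only [labels, List.length_cons, List.length_range] at hlen
  have : labelsList ts = [] := by
    cases hx : labelsList ts with
    | nil => rfl
    | cons x xs => rw [hx] at hlen; simp at hlen
  rw [labelsList_eq_nil this]

theorem finiteGood : ∀ n, Finite {T : LTree // GoodT n T} := by
  intro n
  induction n with
  | zero =>
    haveI : Subsingleton {T : LTree // GoodT 0 T} :=
      ⟨fun a b => Subtype.ext (by rw [good_zero a.2, good_zero b.2])⟩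
    exact Finite.of_subsingleton
  | succ n ih =>
    obtain ⟨e⟩ := stepEquiv (n+1) 0 (by omega)
    try simp only [Nat.add_sub_cancel] at e
    haveI := ih
    haveI : Finite {T : LTree // GoodT (n+1-1) T} := ih
    have e1 : {T : LTree // GoodT (n+1) T} ≃ {T : LTree // GoodT (n+1) T ∧ 0 ≤ rlen T} :=
      Equiv.subtypeEquivRight (fun T => by simp)
    exact Finite.of_equiv _ (e1.trans e).symm

theorem count_slots (n k s : ℕ) (hn : 1 ≤ n) (hk : 1 ≤ k) (hkn : k ≤ n) (hs : s ≤ n - 1) :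
    Fintype.card {i : Fin (2*n-1) // k ≤ (if 2*n-2-s ≤ (i : ℕ) then 2*n-2-(i : ℕ)+1 else s)} =
      if k ≤ s then 2*n-k else if s+1 = k then 1 else 0 := by
  rw [Fintype.card_subtype]
  rw [show (Finset.univ.filter
      (fun i : Fin (2*n-1) => k ≤ (if 2*n-2-s ≤ (i : ℕ) then 2*n-2-(i : ℕ)+1 else s))).card
    = ∑ i : Fin (2*n-1),
        (fun j : ℕ => if k ≤ (if 2*n-2-s ≤ j then 2*n-2-j+1 else s) then 1 else 0) (i : ℕ) from by
      rw [eq_comm, Finset.sum_boole, Nat.cast_id]]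
  rw [Fin.sum_univ_eq_sum_range
    (fun j : ℕ => if k ≤ (if 2*n-2-s ≤ j then 2*n-2-j+1 else s) then 1 else 0) (2*n-1)]
  rw [Finset.range_eq_Ico,
    ← Finset.sum_Ico_consecutive _ (Nat.zero_le (2*n-2-s)) (show 2*n-2-s ≤ 2*n-1 by omega)]
  have congr1 : ∀ j ∈ Finset.Ico 0 (2*n-2-s),
      (if k ≤ (if 2*n-2-s ≤ j then 2*n-2-j+1 else s) then (1:ℕ) else 0)
        = (if k ≤ s then 1 else 0) := by
    intro j hj
    rw [Finset.mem_Ico] at hj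
    rw [if_neg (show ¬ 2*n-2-s ≤ j by omega)]
  have e1 : ∑ j ∈ Finset.Ico 0 (2*n-2-s),
      (if k ≤ (if 2*n-2-s ≤ j then 2*n-2-j+1 else s) then (1:ℕ) else 0)
      = (2*n-2-s) * (if k ≤ s then 1 else 0) := by
    rw [Finset.sum_congr rfl congr1]
    rw [Finset.sum_const, smul_eq_mul, Nat.card_Ico, Nat.sub_zero]
  have congr2 : ∀ j ∈ Finset.Ico (2*n-2-s) (2*n-1),
      (if k ≤ (if 2*n-2-s ≤ j then 2*n-2-j+1 else s) then (1:ℕ) else 0)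
        = (if j < 2*n-k then 1 else 0) := by
    intro j hj
    rw [Finset.mem_Ico] at hj
    rw [if_pos (show 2*n-2-s ≤ j by omega)]
    by_cases hc : k ≤ 2*n-2-j+1
    · rw [if_pos hc, if_pos (show j < 2*n-k by omega)]
    · rw [if_neg hc, if_neg (show ¬ j < 2*n-k by omega)]
  have e2 : ∑ j ∈ Finset.Ico (2*n-2-s) (2*n-1),
      (if k ≤ (if 2*n-2-s ≤ j then 2*n-2-j+1 else s) then (1:ℕ) else 0)
      = min (2*n-1) (2*n-k) - (2*n-2-s) := by
    rw [Finset.sum_congr rfl congr2]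
    rw [Finset.sum_boole]
    rw [Finset.Ico_filter_lt, Nat.card_Ico]
    simp
  rw [e1, e2]
  split_ifs <;> omega

theorem card_big (n k : ℕ) (h : n < k) :
    Nat.card {T : LTree // GoodT n T ∧ k ≤ rlen T} = 0 := by
  haveI : IsEmpty {T : LTree // GoodT n T ∧ k ≤ rlen T} :=
    ⟨fun x => by have := good_rlen_le x.2.1; have := x.2.2; omega⟩
  exact Nat.card_of_isEmpty

theorem card_rec (n k : ℕ) (hn : 1 ≤ n) (hk : 1 ≤ k) (hkn : k ≤ n) :
    Nat.card {T : LTree // GoodT n T ∧ k ≤ rlen T} =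
      (2*n-k-1) * Nat.card {T : LTree // GoodT (n-1) T ∧ k ≤ rlen T}
      + Nat.card {T : LTree // GoodT (n-1) T ∧ k-1 ≤ rlen T} := by
  classical
  obtain ⟨e⟩ := stepEquiv n k hn
  rw [Nat.card_congr e]
  haveI : Finite {T : LTree // GoodT (n-1) T} := finiteGood (n-1)
  haveI : Fintype {T : LTree // GoodT (n-1) T} := Fintype.ofFinite _
  rw [Nat.card_congr (Equiv.subtypeProdEquivSigmaSubtype
    (fun (a : {T : LTree // GoodT (n-1) T}) (b : Fin (2*n-1)) => k ≤ newr n a.1 (b : ℕ)))]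
  rw [Nat.card_eq_fintype_card, Fintype.card_sigma]
  have hcount : ∀ a : {T : LTree // GoodT (n-1) T},
      Fintype.card {b : Fin (2*n-1) // k ≤ newr n a.1 (b : ℕ)} =
        if k ≤ rlen a.1 then 2*n-k else if rlen a.1 + 1 = k then 1 else 0 := by
    intro a
    refine (Fintype.card_congr (Equiv.subtypeEquivRight (fun i => by simp [newr]))).trans
      (count_slots n k (rlen a.1) hn hk hkn (good_rlen_le a.2))
  rw [Finset.sum_congr rfl (fun a _ => hcount a)]
  have hpt : ∀ a : {T : LTree // GoodT (n-1) T},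
      (if k ≤ rlen a.1 then 2*n-k else if rlen a.1 + 1 = k then 1 else 0)
      = (2*n-k-1) * (if k ≤ rlen a.1 then 1 else 0) + (if k-1 ≤ rlen a.1 then 1 else 0) := by
    intro a
    split_ifs <;> omega
  rw [Finset.sum_congr rfl (fun a _ => hpt a)]
  rw [Finset.sum_add_distrib, ← Finset.mul_sum]
  have sum1 : ∀ (c : ℕ), ∑ a : {T : LTree // GoodT (n-1) T}, (if c ≤ rlen a.1 then 1 else 0)
      = Nat.card {T : LTree // GoodT (n-1) T ∧ c ≤ rlen T} := by
    intro c
    rw [Finset.sum_boole]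
    rw [Nat.card_congr (Equiv.subtypeSubtypeEquivSubtypeInter
      (fun T : LTree => GoodT (n-1) T) (fun T => c ≤ rlen T)).symm]
    rw [Nat.card_eq_fintype_card, Fintype.card_subtype]
    simp
  rw [sum1, sum1]

end LTree

namespace LTree

theorem card_rec0 (n : ℕ) (hn : 1 ≤ n) :
    Nat.card {T : LTree // GoodT n T ∧ 0 ≤ rlen T} =
      (2*n-1) * Nat.card {T : LTree // GoodT (n-1) T ∧ 0 ≤ rlen T} := by
  obtain ⟨e⟩ := stepEquiv n 0 hn
  rw [Nat.card_congr e]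
  rw [Nat.card_congr (Equiv.subtypeUnivEquiv (fun p => Nat.zero_le _))]
  rw [Nat.card_prod]
  rw [Nat.card_congr (Equiv.subtypeEquivRight
    (fun T : LTree => by simp : ∀ T : LTree, GoodT (n-1) T ↔ GoodT (n-1) T ∧ 0 ≤ rlen T))]
  rw [Nat.card_eq_fintype_card (α := Fin (2*n-1)), Fintype.card_fin]
  ring

theorem main_count : ∀ n, ∀ k ≤ n,
    Nat.card {T : LTree // GoodT n T ∧ k ≤ rlen T} =
      (2*n-k).choose k * (2*n-2*k-1)‼ := by
  intro n
  induction n with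
  | zero =>
    intro k hk
    have hk0 : k = 0 := Nat.le_zero.mp hk
    subst hk0
    have hgood : GoodT 0 (.node 0 []) := by
      refine ⟨?_, rfl, ?_⟩
      · simp [labels, labelsList, List.range_succ]
      · simp [Incr, IncrList]
    haveI : Nonempty {T : LTree // GoodT 0 T ∧ 0 ≤ rlen T} := ⟨⟨.node 0 [], hgood, Nat.zero_le _⟩⟩
    haveI : Subsingleton {T : LTree // GoodT 0 T ∧ 0 ≤ rlen T} :=
      ⟨fun a b => Subtype.ext (by rw [good_zero a.2.1, good_zero b.2.1])⟩
    rw [Nat.card_unique]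
    rfl
  | succ n ih =>
    intro k hk
    rcases Nat.eq_zero_or_pos k with rfl | hk1
    · -- k = 0
      rw [card_rec0 (n+1) (by omega)]
      rw [show n+1-1 = n from rfl]
      rw [ih 0 (Nat.zero_le n)]
      rcases Nat.eq_zero_or_pos n with rfl | hn1
      · decide
      · simp only [Nat.choose_zero_right, one_mul, Nat.sub_zero, Nat.mul_zero]
        have e1 : 2*(n+1)-1 = (2*n-1)+2 := by omega
        rw [e1, Nat.doubleFactorial_add_two]
    · -- 1 ≤ k
      rw [card_rec (n+1) k (by omega) hk1 hk]
      rw [show n+1-1 = n from rfl]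
      by_cases hkn : k ≤ n
      · rw [ih k hkn, ih (k-1) (by omega)]
        obtain ⟨k', rfl⟩ : ∃ k', k = k'+1 := ⟨k-1, by omega⟩
        have e1 : 2*(n+1)-(k'+1)-1 = (2*n-(k'+1))+1 := by omega
        have e2 : 2*n-(k'+1-1) = (2*n-(k'+1))+1 := by omega
        have e3 : 2*(n+1)-(k'+1) = (2*n-(k'+1))+2 := by omega
        have e4 : 2*n-2*(k'+1-1)-1 = 2*(n-(k'+1))+1 := by omega
        have e5 : 2*(n+1)-2*(k'+1)-1 = 2*(n-(k'+1))+1 := by omega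
        have e6 : (2*(n-(k'+1))+1)‼ = (2*(n-(k'+1))+1) * (2*n-2*(k'+1)-1)‼ := by
          rcases Nat.eq_zero_or_pos (n-(k'+1)) with h0 | h0
          · rw [h0]
            have : 2*n-2*(k'+1)-1 = 0 := by omega
            rw [this]
            rfl
          · have e : 2*(n-(k'+1))+1 = (2*n-2*(k'+1)-1)+2 := by omega
            rw [e, Nat.doubleFactorial_add_two]
        rw [e1, e2, e3, e4, e5, e6]
        have e7 : 2*n-(k'+1)+1-(k'+1) = 2*(n-(k'+1))+1 := by omega
        have pascal : (2*n-(k'+1)+2).choose (k'+1)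
            = (2*n-(k'+1)+1).choose k' + (2*n-(k'+1)+1).choose (k'+1) :=
          Nat.choose_succ_succ' (2*n-(k'+1)+1) k'
        have absorb : (2*n-(k'+1)+1) * (2*n-(k'+1)).choose (k'+1)
            = (2*(n-(k'+1))+1) * (2*n-(k'+1)+1).choose (k'+1) := by
          calc (2*n-(k'+1)+1) * (2*n-(k'+1)).choose (k'+1)
              = (2*n-(k'+1)+1).choose (k'+2) * (k'+2) :=
                Nat.add_one_mul_choose_eq (2*n-(k'+1)) (k'+1)
            _ = (2*n-(k'+1)+1).choose (k'+1) * (2*n-(k'+1)+1-(k'+1)) :=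
                Nat.choose_succ_right_eq (2*n-(k'+1)+1) (k'+1)
            _ = (2*(n-(k'+1))+1) * (2*n-(k'+1)+1).choose (k'+1) := by rw [e7]; ring
        simp only [Nat.add_sub_cancel]
        calc ((2*n-(k'+1))+1) * ((2*n-(k'+1)).choose (k'+1) * (2*n-2*(k'+1)-1)‼)
            + ((2*n-(k'+1))+1).choose k' * ((2*(n-(k'+1))+1) * (2*n-2*(k'+1)-1)‼)
            = ((2*n-(k'+1)+1) * (2*n-(k'+1)).choose (k'+1)) * (2*n-2*(k'+1)-1)‼
              + ((2*n-(k'+1))+1).choose k' * ((2*(n-(k'+1))+1) * (2*n-2*(k'+1)-1)‼) := by ring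
          _ = ((2*(n-(k'+1))+1) * (2*n-(k'+1)+1).choose (k'+1)) * (2*n-2*(k'+1)-1)‼
              + ((2*n-(k'+1))+1).choose k' * ((2*(n-(k'+1))+1) * (2*n-2*(k'+1)-1)‼) := by
                rw [absorb]
          _ = ((2*n-(k'+1)+1).choose k' + (2*n-(k'+1)+1).choose (k'+1))
              * ((2*(n-(k'+1))+1) * (2*n-2*(k'+1)-1)‼) := by ring
          _ = ((2*n-(k'+1))+2).choose (k'+1) * ((2*(n-(k'+1))+1) * (2*n-2*(k'+1)-1)‼) := by
                rw [pascal]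
      · -- k = n+1
        have hkn1 : k = n+1 := by omega
        subst hkn1
        rw [card_big n (n+1) (by omega)]
        simp only [Nat.add_sub_cancel]
        rw [ih n (le_refl n)]
        have e2 : 2*n-n = n := by omega
        have e3 : 2*n-2*n-1 = 0 := by omega
        have e4 : 2*(n+1)-(n+1) = n+1 := by omega
        have e5 : 2*(n+1)-2*(n+1)-1 = 0 := by omega
        rw [e2, e3, e4, e5, Nat.choose_self, Nat.choose_self]
        simp

end LTree

theorem stmt19 (n k : ℕ) (hk : 1 ≤ k) (hkn : k ≤ n) :
    Nat.card {T : LTree // (LTree.labels T).Perm (List.range (n+1)) ∧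
        T.rootLabel = 0 ∧ LTree.Incr T ∧ k ≤ LTree.rlen T}
      = (2*n-k).choose k * (2*n-2*k-1)‼ := by
  rw [Nat.card_congr (Equiv.subtypeEquivRight (fun T => ?_))]
  · exact LTree.main_count n k hkn
  · show _ ↔ LTree.GoodT n T ∧ k ≤ LTree.rlen T
    unfold LTree.GoodT
    tauto
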